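/- arXiv:1008.1462 — 2 statements merged into one kernel-verified Lean document; each statement's English description precedes it below -/
import Mathlib

section
/- In the Iwahori–Hecke algebra of S_n, for a multicomposition ν of n and a row standard ν-tableau v: x_ν T_{d(v)} T_i equals ξ x_ν T_{d(v)} if v s_i is not row standard; x_ν T_{d(v) s_i} if v ⊳ v s_i is row standard; and ξ x_ν T_{d(v) s_i} + (ξ − 1) x_ν T_{d(v)} if v s_i is row standard and v s_i ⊳ v. -/
open scoped Classical

noncomputable section

namespace SpechtInduction

/-- A node `(l, r, c)`: component `l`, row `r`, column `c` (all 0-indexed). -/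
abbrev Node : Type := ℕ × ℕ × ℕ

/-- A multicomposition of `n` with `ℓ` components, each a list of row lengths. -/
structure Multicomp (ℓ n : ℕ) where
  parts : List (List ℕ)
  len_eq : parts.length = ℓ
  size_eq : (parts.map List.sum).sum = n

namespace Multicomp

variable {ℓ n : ℕ}

def rowLen (μ : Multicomp ℓ n) (l r : ℕ) : ℕ := (μ.parts.getD l []).getD r 0

def mem (μ : Multicomp ℓ n) (x : Node) : Prop := x.2.2 < μ.rowLen x.1 x.2.1

def compSize (μ : Multicomp ℓ n) (l : ℕ) : ℕ := (μ.parts.getD l []).sum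

/-- The partial sums appearing in the dominance order. -/
def psum (μ : Multicomp ℓ n) (l i : ℕ) : ℕ :=
  (∑ k ∈ Finset.range l, μ.compSize k) + ∑ j ∈ Finset.range i, μ.rowLen l j

/-- The dominance order `lam ⊵ mu` on multicompositions. -/
def Dominates (lam mu : Multicomp ℓ n) : Prop := ∀ l i, mu.psum l i ≤ lam.psum l i

/-- Each component is a (weakly decreasing) partition. -/
def IsMultipartition (μ : Multicomp ℓ n) : Prop := ∀ l r, μ.rowLen l (r+1) ≤ μ.rowLen l r

end Multicomp

/-- A `μ`-tableau, recorded by the position function sending each entry `k ∈ {1,…,n}`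
to the node it occupies: a bijection onto the diagram of `μ`. -/
def IsTableau {ℓ n : ℕ} (μ : Multicomp ℓ n) (pos : ℕ → Node) : Prop :=
  (∀ j k, 1 ≤ j → j ≤ n → 1 ≤ k → k ≤ n → pos j = pos k → j = k) ∧
  (∀ k, 1 ≤ k → k ≤ n → μ.mem (pos k)) ∧
  (∀ x, μ.mem x → ∃ k, 1 ≤ k ∧ k ≤ n ∧ pos k = x)

/-- Row standard: entries increase along the rows. -/
def RowStandard {ℓ n : ℕ} (μ : Multicomp ℓ n) (pos : ℕ → Node) : Prop :=
  IsTableau μ pos ∧ ∀ j k, 1 ≤ j → j ≤ n → 1 ≤ k → k ≤ n →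
    (pos j).1 = (pos k).1 → (pos j).2.1 = (pos k).2.1 → (pos j).2.2 < (pos k).2.2 → j < k

/-- Column standard (= conjugate is row standard): entries increase down the columns. -/
def ColStandard {ℓ n : ℕ} (μ : Multicomp ℓ n) (pos : ℕ → Node) : Prop :=
  IsTableau μ pos ∧ ∀ j k, 1 ≤ j → j ≤ n → 1 ≤ k → k ≤ n →
    (pos j).1 = (pos k).1 → (pos j).2.2 = (pos k).2.2 → (pos j).2.1 < (pos k).2.1 → j < k

/-- Standard tableau: the tableau and its conjugate are both row standard. -/
def StandardTab {ℓ n : ℕ} (μ : Multicomp ℓ n) (pos : ℕ → Node) : Prop :=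
  RowStandard μ pos ∧ ColStandard μ pos

/-- Number of entries `≤ m` lying in row `(l,r)`. -/
def cnt (pos : ℕ → Node) (m l r : ℕ) : ℕ :=
  ((Finset.Icc 1 m).filter fun k => (pos k).1 = l ∧ (pos k).2.1 = r).card

/-- Number of entries `≤ m` lying in column `c` of component `l`. -/
def ccnt (pos : ℕ → Node) (m l c : ℕ) : ℕ :=
  ((Finset.Icc 1 m).filter fun k => (pos k).1 = l ∧ (pos k).2.2 = c).card

/-- Number of entries `≤ m` lying in component `l`. -/
def compcnt (pos : ℕ → Node) (m l : ℕ) : ℕ :=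
  ((Finset.Icc 1 m).filter fun k => (pos k).1 = l).card

/-- Dominance partial sums of the shape `Shape(t_m)` of the subtableau on entries `1,…,m`. -/
def tabPsum (pos : ℕ → Node) (m l i : ℕ) : ℕ :=
  (∑ k ∈ Finset.range l, compcnt pos m k) + ∑ j ∈ Finset.range i, cnt pos m l j

/-- Dominance order `s ⊵ t` on tableaux with `n` entries:
`Shape(s_m) ⊵ Shape(t_m)` for all `1 ≤ m ≤ n`. -/
def TabDominates (n : ℕ) (s t : ℕ → Node) : Prop :=
  ∀ m l i, 1 ≤ m → m ≤ n → tabPsum t m l i ≤ tabPsum s m l i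

/-- Dominance partial sums of the shape of the *conjugate* of the subtableau `pos_m`,
for a tableau with `ℓ` components (components get reversed, rows and columns swapped). -/
def conjPsum (ℓ : ℕ) (pos : ℕ → Node) (m l i : ℕ) : ℕ :=
  (∑ k ∈ Finset.range l, compcnt pos m (ℓ - 1 - k)) +
    ∑ j ∈ Finset.range i, ccnt pos m (ℓ - 1 - l) j

/-- `t' ⊵ s'`: the conjugate of `t` dominates the conjugate of `s`. -/
def ConjTabDominates (ℓ n : ℕ) (t s : ℕ → Node) : Prop :=
  ∀ m l i, 1 ≤ m → m ≤ n → conjPsum ℓ s m l i ≤ conjPsum ℓ t m l i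

/-- `u' ⊵ t`: the conjugate of `u` dominates `t`. -/
def ConjDomTab (ℓ n : ℕ) (u t : ℕ → Node) : Prop :=
  ∀ m l i, 1 ≤ m → m ≤ n → tabPsum t m l i ≤ conjPsum ℓ u m l i

/-- Lexicographic (row reading) order on nodes: by component, then row, then column. -/
def nodeLex (x y : Node) : Prop :=
  x.1 < y.1 ∨ (x.1 = y.1 ∧ (x.2.1 < y.2.1 ∨ (x.2.1 = y.2.1 ∧ x.2.2 < y.2.2)))

/-- `pos` is the row-reading tableau `t^μ` of `μ`: entries filled in order along
the rows of each component in turn. -/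
def IsRowReading {ℓ n : ℕ} (μ : Multicomp ℓ n) (pos : ℕ → Node) : Prop :=
  IsTableau μ pos ∧ ∀ j k, 1 ≤ j → j ≤ n → 1 ≤ k → k ≤ n → (j < k ↔ nodeLex (pos j) (pos k))

/-- Column reading order on nodes: components from last to first, then columns, then rows. -/
def nodeColLex (x y : Node) : Prop :=
  y.1 < x.1 ∨ (x.1 = y.1 ∧ (x.2.2 < y.2.2 ∨ (x.2.2 = y.2.2 ∧ x.2.1 < y.2.1)))

/-- `pos` is the column-reading tableau `t_μ` of `μ`: entries filled in order down the
columns, from the last component to the first. -/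
def IsColReading {ℓ n : ℕ} (μ : Multicomp ℓ n) (pos : ℕ → Node) : Prop :=
  IsTableau μ pos ∧ ∀ j k, 1 ≤ j → j ≤ n → 1 ≤ k → k ≤ n → (j < k ↔ nodeColLex (pos j) (pos k))

/-- `w` lies in the "symmetric group on `{a,…,b}`": it fixes every point outside `[a,b]`. -/
def FixesOutside (w : Equiv.Perm ℕ) (a b : ℕ) : Prop := ∀ k, k < a ∨ b < k → w k = k

/-- Coxeter length of a permutation of `{1,…,n}`, as the number of inversions. -/
def permLength (n : ℕ) (w : Equiv.Perm ℕ) : ℕ :=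
  (((Finset.Icc 1 n) ×ˢ (Finset.Icc 1 n)).filter fun p => p.1 < p.2 ∧ w p.2 < w p.1).card

/-- Right action of a permutation on a tableau (position function). -/
def actTab (pos : ℕ → Node) (w : Equiv.Perm ℕ) : ℕ → Node := fun k => pos (w k)

/-- `d` is the permutation `d(pos)` with `pos = tpos · d`, `tpos` the reference tableau. -/
def IsDPerm (n : ℕ) (tpos pos : ℕ → Node) (d : Equiv.Perm ℕ) : Prop :=
  FixesOutside d 1 n ∧ ∀ k, 1 ≤ k → k ≤ n → pos k = tpos (d k)

/-- The simple transposition `s_i = (i, i+1)`. -/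
def swapP (i : ℕ) : Equiv.Perm ℕ := Equiv.swap i (i + 1)

/-- The product `s_{i₁} ⋯ s_{i_k}` of a word in the Coxeter generators. -/
def wordProd (L : List ℕ) : Equiv.Perm ℕ := (L.map swapP).prod

/-- A reduced word for its product, using generators `s_1,…,s_{n-1}`. -/
def IsReducedWord (n : ℕ) (L : List ℕ) : Prop :=
  (∀ i ∈ L, 1 ≤ i ∧ i < n) ∧ L.length = permLength n (wordProd L)

/-- Bruhat order on `S_n`: some reduced expression of `u` is a subexpression of some
reduced expression of `w`. -/
def BruhatLE (n : ℕ) (u w : Equiv.Perm ℕ) : Prop :=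
  ∃ ww uw : List ℕ, IsReducedWord n ww ∧ wordProd ww = w ∧
    uw.Sublist ww ∧ IsReducedWord n uw ∧ wordProd uw = u

/-- Membership in the Young subgroup `S_μ`: `w` fixes `[1,n]` setwise, preserving each
row of the reference row-reading tableau `tpos = t^μ`. -/
def YoungMem (n : ℕ) (tpos : ℕ → Node) (w : Equiv.Perm ℕ) : Prop :=
  FixesOutside w 1 n ∧ ∀ k, 1 ≤ k → k ≤ n →
    (tpos (w k)).1 = (tpos k).1 ∧ (tpos (w k)).2.1 = (tpos k).2.1

/-- `accSize μ k = |μ^(1)| + ⋯ + |μ^(k)|`. -/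
def accSize {ℓ n : ℕ} (μ : Multicomp ℓ n) (k : ℕ) : ℕ := ∑ j ∈ Finset.range k, μ.compSize j

/-- The content of a node, with `ξinv` a fixed inverse of `ξ`:
`ξ^(c-r) Q_l` if `ξ ≠ 1` and `c - r + Q_l` if `ξ = 1`. -/
def contOfR {R : Type*} [CommRing R] (ξ ξinv : R) (Q : ℕ → R) (x : Node) : R :=
  if ξ = 1 then ((x.2.2 : R) - (x.2.1 : R)) + Q (x.1 + 1)
  else ξ ^ x.2.2 * ξinv ^ x.2.1 * Q (x.1 + 1)

/-- The set of contents `cont_s(k)` as `s` ranges over all standard tableaux of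
multipartitions of `n`. -/
def ContSet (ℓ n : ℕ) {R : Type*} [CommRing R] (ξ ξinv : R) (Q : ℕ → R) (k : ℕ) : Set R :=
  {c | ∃ (μ : Multicomp ℓ n) (pos : ℕ → Node), μ.IsMultipartition ∧ StandardTab μ pos ∧
        c = contOfR ξ ξinv Q (pos k)}

/-- The cyclotomic Hecke algebra of type `G(ℓ,1,n)`: an `R`-algebra `A` equipped with
generators satisfying the defining relations, together with the elements `T_w` and the
`*` anti-involution fixing the generators. -/
structure Hecke (R : Type*) [CommRing R] (A : Type*) [Ring A] [Algebra R A]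
    (n ℓ : ℕ) (ξ : R) (Q : ℕ → R) where
  L : ℕ → A
  T : ℕ → A
  Tw : Equiv.Perm ℕ → A
  star : A →ₗ[R] A
  cyclotomic : ((List.range ℓ).map fun k => L 1 - algebraMap R A (Q (k + 1))).prod = 0
  LL : ∀ r t, L r * L t = L t * L r
  quad : ∀ r, 1 ≤ r → r < n → (T r + 1) * (T r - algebraMap R A ξ) = 0
  TL : ∀ r, 1 ≤ r → r < n →
      T r * L r + (if ξ = 1 then 1 else 0) = L (r + 1) * (T r - algebraMap R A ξ + 1)
  braid : ∀ s, 1 ≤ s → s + 1 < n → T s * T (s + 1) * T s = T (s + 1) * T s * T (s + 1)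
  TLfar : ∀ r t, 1 ≤ r → r < n → t ≠ r → t ≠ r + 1 → T r * L t = L t * T r
  TTfar : ∀ r s, 1 ≤ r → r < n → 1 ≤ s → s < n → (r + 1 < s ∨ s + 1 < r) →
      T r * T s = T s * T r
  Tw_one : Tw 1 = 1
  Tw_mul : ∀ w i, 1 ≤ i → i < n → permLength n w < permLength n (w * swapP i) →
      Tw (w * swapP i) = Tw w * T i
  star_mul : ∀ a b, star (a * b) = star b * star a
  star_one : star 1 = 1
  star_L : ∀ r, star (L r) = L r
  star_T : ∀ r, star (T r) = T r

namespace Hecke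

variable {R : Type*} [CommRing R] {A : Type*} [Ring A] [Algebra R A]
  {n ℓ : ℕ} {ξ : R} {Q : ℕ → R}

/-- `x_μ = Σ_{w ∈ S_μ} T_w`, where `tpos = t^μ`. -/
def xElt (h : Hecke R A n ℓ ξ Q) (tpos : ℕ → Node) : A :=
  ∑ᶠ (w : Equiv.Perm ℕ) (_ : YoungMem n tpos w), h.Tw w

/-- `y_μ = Σ_{w ∈ S_μ} (-ξ)^{-ℓ(w)} T_w`. -/
def yElt (h : Hecke R A n ℓ ξ Q) (ξinv : R) (tpos : ℕ → Node) : A :=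
  ∑ᶠ (w : Equiv.Perm ℕ) (_ : YoungMem n tpos w), ((-ξinv) ^ permLength n w) • h.Tw w

/-- `u⁺_μ = Π_{k=2}^{ℓ} Π_{m=1}^{|μ^(1)|+⋯+|μ^(k-1)|} (L_m - Q_k)`. -/
def uPlus (h : Hecke R A n ℓ ξ Q) (μ : Multicomp ℓ n) : A :=
  ((List.range' 2 (ℓ - 1)).map fun k =>
    ((List.range' 1 (accSize μ (k - 1))).map fun m => h.L m - algebraMap R A (Q k)).prod).prod

/-- `u⁻_μ = Π_{k=1}^{ℓ-1} Π_{m=1}^{|μ^(1)|+⋯+|μ^(ℓ-k+1)|} (L_m - Q_k)`. -/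
def uMinus (h : Hecke R A n ℓ ξ Q) (μ : Multicomp ℓ n) : A :=
  ((List.range' 1 (ℓ - 1)).map fun k =>
    ((List.range' 1 (accSize μ (ℓ - k + 1))).map fun m => h.L m - algebraMap R A (Q k)).prod).prod

/-- `m_μ = u⁺_μ x_μ` (here `tpos = t^μ`). -/
def mmu (h : Hecke R A n ℓ ξ Q) (μ : Multicomp ℓ n) (tpos : ℕ → Node) : A :=
  h.uPlus μ * h.xElt tpos

/-- `n_μ = u⁻_μ y_μ`. -/
def nmu (h : Hecke R A n ℓ ξ Q) (ξinv : R) (μ : Multicomp ℓ n) (tpos : ℕ → Node) : A :=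
  h.uMinus μ * h.yElt ξinv tpos

/-- The Murphy basis element `m_{st} = T_{d(s)}^* m_μ T_{d(t)}`. -/
def mst (h : Hecke R A n ℓ ξ Q) (μ : Multicomp ℓ n) (tpos : ℕ → Node)
    (ds dt : Equiv.Perm ℕ) : A :=
  h.star (h.Tw ds) * h.mmu μ tpos * h.Tw dt

/-- The dual Murphy basis element `n_{st} = T_{d(s)}^* n_μ T_{d(t)}`. -/
def nst (h : Hecke R A n ℓ ξ Q) (ξinv : R) (μ : Multicomp ℓ n) (tpos : ℕ → Node)
    (ds dt : Equiv.Perm ℕ) : A :=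
  h.star (h.Tw ds) * h.nmu ξinv μ tpos * h.Tw dt

end Hecke

/-- The element `F_t = Π_{k=1}^n Π_{c ∈ contents, c ≠ cont_t(k)}
`(L_k - c)/(cont_t(k) - c)` of the split semisimple cyclotomic Hecke algebra. -/
def Ftab {K : Type*} [Field K] {A : Type*} [Ring A] [Algebra K A] {n ℓ : ℕ} {ξ : K}
    {Q : ℕ → K} (h : Hecke K A n ℓ ξ Q)
    (hfin : ∀ k, (ContSet ℓ n ξ ξ⁻¹ Q k).Finite) (t : ℕ → Node) : A :=
  ((List.range n).map fun k0 =>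
    Finset.noncommProd
      (((hfin (k0 + 1)).toFinset).filter fun c => c ≠ contOfR ξ ξ⁻¹ Q (t (k0 + 1)))
      (fun c => algebraMap K A ((contOfR ξ ξ⁻¹ Q (t (k0 + 1)) - c)⁻¹) *
        (h.L (k0 + 1) - algebraMap K A c))
      (by
        intro a _ b _ _
        have hc : ∀ (r : K) (z : A), Commute (algebraMap K A r) z := fun r z =>
          Algebra.commutes r z
        have c1 : Commute (h.L (k0 + 1) - algebraMap K A a)
            (h.L (k0 + 1) - algebraMap K A b) :=
          Commute.sub_left ((Commute.refl (h.L (k0 + 1))).sub_right ((hc b _).symm))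
            (hc a _)
        exact Commute.mul_left (hc _ _)
          (Commute.mul_right ((hc _ _).symm) c1)
        )).prod

/-- The seminormal basis element `f_{st} = F_s m_{st} F_t`.  Here `tpos = t^μ` and
`ds, dt` are the permutations with `s = t^μ d(s)`, `t = t^μ d(t)`. -/
def fElt {K : Type*} [Field K] {A : Type*} [Ring A] [Algebra K A] {n ℓ : ℕ} {ξ : K}
    {Q : ℕ → K} (h : Hecke K A n ℓ ξ Q)
    (hfin : ∀ k, (ContSet ℓ n ξ ξ⁻¹ Q k).Finite) (μ : Multicomp ℓ n)
    (tpos spos tpos' : ℕ → Node) (ds dt : Equiv.Perm ℕ) : A :=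
  Ftab h hfin spos * h.mst μ tpos ds dt * Ftab h hfin tpos'

/-- Semisimplicity of the cyclotomic Hecke algebra, in the equivalent combinatorial form:
contents separate standard tableaux. -/
def SeparatedContents (ℓ n : ℕ) {R : Type*} [CommRing R] (ξ ξinv : R) (Q : ℕ → R) : Prop :=
  ∀ (μ ν : Multicomp ℓ n) (s t : ℕ → Node), μ.IsMultipartition → ν.IsMultipartition →
    StandardTab μ s → StandardTab ν t →
    (∀ k, 1 ≤ k → k ≤ n → contOfR ξ ξinv Q (s k) = contOfR ξ ξinv Q (t k)) →
    ∀ k, 1 ≤ k → k ≤ n → s k = t k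

/-! ## Residues, degrees and the quiver combinatorics -/

/-- The residue of a node: `c - r + κ_l (mod e)`. -/
def resOf (e : ℕ) (κ : ℕ → ℤ) (x : Node) : ZMod e :=
  (((x.2.2 : ℤ) - (x.2.1 : ℤ) + κ x.1 : ℤ) : ZMod e)

/-- The entries of the Cartan matrix of the quiver `Γ_e`. -/
def cartanInt (e : ℕ) (i j : ZMod e) : ℤ :=
  (if i = j then 2 else 0) + (if j = i + 1 ∧ i ≠ j then -1 else 0) +
    (if j = i - 1 ∧ i ≠ j then -1 else 0)

/-- `x` is an addable node of the shape with row lengths `f` (with `ℓ` components). -/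
def AddableNode (f : ℕ → ℕ → ℕ) (ℓ : ℕ) (x : Node) : Prop :=
  x.1 < ℓ ∧ x.2.2 = f x.1 x.2.1 ∧ (x.2.1 = 0 ∨ x.2.2 < f x.1 (x.2.1 - 1))

/-- `x` is a removable node of the shape with row lengths `f`. -/
def RemovableNode (f : ℕ → ℕ → ℕ) (ℓ : ℕ) (x : Node) : Prop :=
  x.1 < ℓ ∧ x.2.2 + 1 = f x.1 x.2.1 ∧ f x.1 (x.2.1 + 1) ≤ x.2.2

/-- `x` is strictly below `y`. -/
def Below (x y : Node) : Prop := y.1 < x.1 ∨ (x.1 = y.1 ∧ y.2.1 < x.2.1)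

/-- A finite region containing all relevant nodes. -/
def nodeRegion (ℓ n : ℕ) : Finset Node :=
  (Finset.range ℓ) ×ˢ (Finset.range (n + 1)) ×ˢ (Finset.range (n + 1))

/-- `d_A(μ) = #{addable i-nodes below A} - #{removable i-nodes below A}` (same residue). -/
def dBelow (e ℓ n : ℕ) (κ : ℕ → ℤ) (f : ℕ → ℕ → ℕ) (A : Node) : ℤ :=
  ((((nodeRegion ℓ n).filter fun x =>
      AddableNode f ℓ x ∧ resOf e κ x = resOf e κ A ∧ Below x A).card : ℤ)) -
  (((nodeRegion ℓ n).filter fun x =>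
      RemovableNode f ℓ x ∧ resOf e κ x = resOf e κ A ∧ Below x A).card : ℤ)

/-- `d^A(μ)`: the same with "above" in place of "below". -/
def dAbove (e ℓ n : ℕ) (κ : ℕ → ℤ) (f : ℕ → ℕ → ℕ) (A : Node) : ℤ :=
  ((((nodeRegion ℓ n).filter fun x =>
      AddableNode f ℓ x ∧ resOf e κ x = resOf e κ A ∧ Below A x).card : ℤ)) -
  (((nodeRegion ℓ n).filter fun x =>
      RemovableNode f ℓ x ∧ resOf e κ x = resOf e κ A ∧ Below A x).card : ℤ)

/-- The shape (row-length function) of the subtableau of `pos` on entries `1,…,m`. -/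
def subShape (pos : ℕ → Node) (m : ℕ) : ℕ → ℕ → ℕ := fun l r => cnt pos m l r

/-- The Brundan–Kleshchev–Wang degree of a standard tableau. -/
def degTab (e ℓ n : ℕ) (κ : ℕ → ℤ) (pos : ℕ → Node) : ℤ :=
  ∑ k ∈ Finset.range n, dBelow e ℓ n κ (subShape pos k) (pos (k + 1))

/-- The codegree of a standard tableau. -/
def codegTab (e ℓ n : ℕ) (κ : ℕ → ℤ) (pos : ℕ → Node) : ℤ :=
  ∑ k ∈ Finset.range n, dAbove e ℓ n κ (subShape pos k) (pos (k + 1))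

/-- `(Λ, β)` where `β = Σ_k α_{res(k)}` for the residue sequence of `pos`. -/
def lamBeta (e ℓ n : ℕ) (κ : ℕ → ℤ) (pos : ℕ → Node) : ℤ :=
  ∑ k ∈ Finset.range n,
    (((Finset.range ℓ).filter fun l => ((κ l : ZMod e)) = resOf e κ (pos (k + 1))).card : ℤ)

/-- `(β, β)` for `β = Σ_k α_{res(k)}`. -/
def betaBeta (e ℓ n : ℕ) (κ : ℕ → ℤ) (pos : ℕ → Node) : ℤ :=
  ∑ j ∈ Finset.range n, ∑ k ∈ Finset.range n,
    cartanInt e (resOf e κ (pos (j + 1))) (resOf e κ (pos (k + 1)))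

/-- The defect `(Λ, β) - (β, β)/2` of the block containing `pos`. -/
def defectOf (e ℓ n : ℕ) (κ : ℕ → ℤ) (pos : ℕ → Node) : ℤ :=
  lamBeta e ℓ n κ pos - betaBeta e ℓ n κ pos / 2

/-- The conjugate of a node (for a shape with `ℓ` components). -/
def conjNode (ℓ : ℕ) (x : Node) : Node := (ℓ - 1 - x.1, x.2.2, x.2.1)

/-- The sequence obtained by swapping places `s` and `s+1`. -/
def swapSeq {e : ℕ} (s : ℕ) (i : ℕ → ZMod e) : ℕ → ZMod e :=
  fun k => if k = s then i (s + 1) else if k = s + 1 then i s else i k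


/-- The cyclotomic quiver Hecke (KLR) algebra `R_n^Λ` of type `Γ_e`: an `R`-algebra `A`
with generators satisfying the KLR relations, together with its grading and the graded
anti-involution fixing the generators.  Idempotents are indexed by residue sequences
`i : ℕ → ZMod e` (only the values at `1,…,n` matter); `Λm j = (Λ, α_j)`. -/
structure KLR (R : Type*) [CommRing R] (A : Type*) [Ring A] [Algebra R A]
    (e n : ℕ) (Λm : ZMod e → ℕ) where
  E : (ℕ → ZMod e) → A
  Y : ℕ → A
  Psi : ℕ → A
  star : A →ₗ[R] A
  GS : ℤ → Submodule R A
  E_ext : ∀ i j : ℕ → ZMod e, (∀ k, 1 ≤ k → k ≤ n → i k = j k) → E i = E j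
  orth : ∀ i j : ℕ → ZMod e,
      E i * E j = if (∀ k, 1 ≤ k → k ≤ n → i k = j k) then E i else 0
  sumE : ∀ S : Finset (ℕ → ZMod e),
      (∀ j ∈ S, ∀ j' ∈ S, (∀ k, 1 ≤ k → k ≤ n → j k = j' k) → j = j') →
      (∀ i : ℕ → ZMod e, ∃ j ∈ S, ∀ k, 1 ≤ k → k ≤ n → i k = j k) →
      ∑ j ∈ S, E j = 1
  cyc : ∀ i : ℕ → ZMod e, Y 1 ^ (Λm (i 1)) * E i = 0
  YE : ∀ (i : ℕ → ZMod e) (r : ℕ), Y r * E i = E i * Y r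
  PsiE : ∀ (i : ℕ → ZMod e) (s : ℕ), Psi s * E i = E (swapSeq s i) * Psi s
  YY : ∀ r s, Y r * Y s = Y s * Y r
  PsiY : ∀ r s, 1 ≤ s → s < n → r ≠ s → r ≠ s + 1 → Psi s * Y r = Y r * Psi s
  PsiPsi : ∀ r s, r + 1 < s ∨ s + 1 < r → Psi r * Psi s = Psi s * Psi r
  PsiYE : ∀ (i : ℕ → ZMod e) (r : ℕ), 1 ≤ r → r < n →
      Psi r * Y (r + 1) * E i =
        (if i r = i (r + 1) then Y r * Psi r + 1 else Y r * Psi r) * E i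
  YPsiE : ∀ (i : ℕ → ZMod e) (r : ℕ), 1 ≤ r → r < n →
      Y (r + 1) * Psi r * E i =
        (if i r = i (r + 1) then Psi r * Y r + 1 else Psi r * Y r) * E i
  PsiSq : ∀ (i : ℕ → ZMod e) (r : ℕ), 1 ≤ r → r < n →
      Psi r * Psi r * E i =
        if i r = i (r + 1) then 0
        else if i (r + 1) ≠ i r + 1 ∧ i (r + 1) ≠ i r - 1 then E i
        else if e ≠ 2 ∧ i (r + 1) = i r + 1 then (Y (r + 1) - Y r) * E i
        else if e ≠ 2 ∧ i (r + 1) = i r - 1 then (Y r - Y (r + 1)) * E i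
        else (Y (r + 1) - Y r) * (Y r - Y (r + 1)) * E i
  braid : ∀ (i : ℕ → ZMod e) (r : ℕ), 1 ≤ r → r + 1 < n →
      Psi r * Psi (r + 1) * Psi r * E i =
        (if e ≠ 2 ∧ i (r + 2) = i r ∧ i (r + 1) = i r + 1 then
            Psi (r + 1) * Psi r * Psi (r + 1) + 1
         else if e ≠ 2 ∧ i (r + 2) = i r ∧ i r = i (r + 1) + 1 then
            Psi (r + 1) * Psi r * Psi (r + 1) - 1
         else if e = 2 ∧ i (r + 2) = i r ∧ i r = i (r + 1) + 1 then
            Psi (r + 1) * Psi r * Psi (r + 1) + Y r - Y (r + 1) - Y (r + 1) + Y (r + 2)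
         else Psi (r + 1) * Psi r * Psi (r + 1)) * E i
  star_mul : ∀ a b, star (a * b) = star b * star a
  star_E : ∀ i, star (E i) = E i
  star_Y : ∀ r, star (Y r) = Y r
  star_Psi : ∀ s, star (Psi s) = Psi s
  E_mem : ∀ i, E i ∈ GS 0
  Y_mem : ∀ r, Y r ∈ GS 2
  Psi_mem : ∀ (i : ℕ → ZMod e) (s : ℕ), Psi s * E i ∈ GS (-(cartanInt e (i s) (i (s + 1))))
  GS_mul : ∀ (d d' : ℤ) (a b : A), a ∈ GS d → b ∈ GS d' → a * b ∈ GS (d + d')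

namespace KLR

variable {R : Type*} [CommRing R] {A : Type*} [Ring A] [Algebra R A]
  {e n : ℕ} {Λm : ZMod e → ℕ}

/-- `ψ_{i₁} ⋯ ψ_{i_k}` for a (reduced) word. -/
def psiWord (Kk : KLR R A e n Λm) (L : List ℕ) : A := (L.map Kk.Psi).prod

/-- The residue sequence of a tableau. -/
def resSeq (e : ℕ) (κ : ℕ → ℤ) (pos : ℕ → Node) : ℕ → ZMod e := fun k => resOf e κ (pos k)

/-- The monomial `y_μ = y_1^{d_1} ⋯ y_n^{d_n}` of Hu–Mathas, where `tpos = t^μ` and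
`d_m = d_{A_m}(μ_m)`. -/
def yMu (Kk : KLR R A e n Λm) (ℓ : ℕ) (κ : ℕ → ℤ) (tpos : ℕ → Node) : A :=
  ((List.range n).map fun m0 =>
    Kk.Y (m0 + 1) ^ (dBelow e ℓ n κ (subShape tpos m0) (tpos (m0 + 1))).toNat).prod

/-- The monomial `y'_μ = y_1^{d'_1} ⋯ y_n^{d'_n}`, computed from `t_{μ'}`, the conjugate
of `tpos = t^μ`, with `d'_m = d^{A'_m}(μ'_m)`. -/
def yMu' (Kk : KLR R A e n Λm) (ℓ : ℕ) (κ : ℕ → ℤ) (tpos : ℕ → Node) : A :=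
  ((List.range n).map fun m0 =>
    Kk.Y (m0 + 1) ^
      (dAbove e ℓ n κ (subShape (fun k => conjNode ℓ (tpos k)) m0)
        (conjNode ℓ (tpos (m0 + 1)))).toNat).prod

/-- The Hu–Mathas basis element `ψ_{st} = ψ_{d(s)}^⋆ e_μ y_μ ψ_{d(t)}`, where `tpos = t^μ`
and `ws, wt` are the chosen reduced words for `d(s), d(t)`. -/
def psiST (Kk : KLR R A e n Λm) (ℓ : ℕ) (κ : ℕ → ℤ) (tpos : ℕ → Node)
    (ws wt : List ℕ) : A :=
  Kk.star (Kk.psiWord ws) * Kk.E (resSeq e κ tpos) * Kk.yMu ℓ κ tpos * Kk.psiWord wt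

/-- The dual basis element `ψ'_{st} = ψ_{d(s)}^⋆ e'_μ y'_μ ψ_{d(t)}`, where
`e'_μ = e(res(t_{μ'}))` and `t_{μ'}` is the conjugate of `tpos = t^μ`. -/
def psiST' (Kk : KLR R A e n Λm) (ℓ : ℕ) (κ : ℕ → ℤ) (tpos : ℕ → Node)
    (ws wt : List ℕ) : A :=
  Kk.star (Kk.psiWord ws) * Kk.E (resSeq e κ fun k => conjNode ℓ (tpos k)) *
    Kk.yMu' ℓ κ tpos * Kk.psiWord wt

end KLR


/-! ### Auxiliary permutation-length toolkit -/

section AuxPerm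

lemma swapP_apply_left (i : ℕ) : swapP i i = i + 1 := Equiv.swap_apply_left i (i+1)

lemma swapP_apply_right (i : ℕ) : swapP i (i+1) = i := Equiv.swap_apply_right i (i+1)

lemma swapP_apply_of_ne (i k : ℕ) (h1 : k ≠ i) (h2 : k ≠ i+1) : swapP i k = k :=
  Equiv.swap_apply_of_ne_of_ne h1 h2

lemma swapP_apply_self (i k : ℕ) : swapP i (swapP i k) = k := Equiv.swap_apply_self _ _ _

lemma swapP_mul_self (i : ℕ) : swapP i * swapP i = 1 := Equiv.swap_mul_self _ _

lemma swapP_mono {i p q : ℕ} (hpq : p < q) (hne : (p, q) ≠ (i, i+1)) :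
    swapP i p < swapP i q := by
  rcases eq_or_ne p i with rfl | hpi
  · rcases eq_or_ne q (p+1) with rfl | hq1
    · exact absurd rfl hne
    · rw [swapP_apply_left, swapP_apply_of_ne _ _ (by omega) hq1]; omega
  · rcases eq_or_ne p (i+1) with rfl | hpi1
    · rw [swapP_apply_right, swapP_apply_of_ne _ _ (by omega) (by omega)]; omega
    · rw [swapP_apply_of_ne _ _ hpi hpi1]
      rcases eq_or_ne q i with rfl | hqi
      · rw [swapP_apply_left]; omega
      · rcases eq_or_ne q (i+1) with rfl | hq1
        · rw [swapP_apply_right]; omega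
        · rw [swapP_apply_of_ne _ _ hqi hq1]; exact hpq

lemma fixesOutside_maps {w : Equiv.Perm ℕ} {n : ℕ} (hw : FixesOutside w 1 n)
    {k : ℕ} (hk1 : 1 ≤ k) (hk2 : k ≤ n) : 1 ≤ w k ∧ w k ≤ n := by
  by_contra hc
  have h1 : w (w k) = w k := hw _ (by omega)
  have h2 := w.injective h1
  omega

lemma fixesOutside_inv {w : Equiv.Perm ℕ} {n : ℕ} (hw : FixesOutside w 1 n) :
    FixesOutside w⁻¹ 1 n := by
  intro k hk
  conv_lhs => rw [← hw k hk]
  exact Equiv.symm_apply_apply w k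

lemma fixesOutside_mul {u w : Equiv.Perm ℕ} {n : ℕ} (hu : FixesOutside u 1 n)
    (hw : FixesOutside w 1 n) : FixesOutside (u * w) 1 n := fun k hk => by
  rw [Equiv.Perm.mul_apply, hw k hk, hu k hk]

lemma swapP_fixesOutside {i n : ℕ} (hi1 : 1 ≤ i) (hi2 : i < n) :
    FixesOutside (swapP i) 1 n := by
  intro k hk
  exact swapP_apply_of_ne _ _ (by omega) (by omega)

/-- The inversion set computing `permLength`. -/
def invSet (n : ℕ) (w : Equiv.Perm ℕ) : Finset (ℕ × ℕ) :=
  ((Finset.Icc 1 n) ×ˢ (Finset.Icc 1 n)).filter fun p => p.1 < p.2 ∧ w p.2 < w p.1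

lemma permLength_eq (n : ℕ) (w : Equiv.Perm ℕ) : permLength n w = (invSet n w).card := rfl

lemma mem_invSet {n : ℕ} {w : Equiv.Perm ℕ} {p : ℕ × ℕ} :
    p ∈ invSet n w ↔ ((1 ≤ p.1 ∧ p.1 ≤ n) ∧ (1 ≤ p.2 ∧ p.2 ≤ n)) ∧ p.1 < p.2 ∧ w p.2 < w p.1 := by
  simp [invSet, Finset.mem_Icc]

lemma permLength_one (n : ℕ) : permLength n 1 = 0 := by
  rw [permLength_eq, Finset.card_eq_zero, invSet, Finset.filter_eq_empty_iff]
  intro p _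
  simp only [Equiv.Perm.one_apply]
  omega

lemma permLength_mul_swap (w : Equiv.Perm ℕ) {n i : ℕ} (hi1 : 1 ≤ i) (hi2 : i < n)
    (h : w i < w (i+1)) : permLength n (w * swapP i) = permLength n w + 1 := by
  have hmemA : (i, i+1) ∈ invSet n (w * swapP i) := by
    rw [mem_invSet]
    refine ⟨⟨⟨by omega, by omega⟩, by omega, by omega⟩, by omega, ?_⟩
    simpa [Equiv.Perm.mul_apply, swapP_apply_left, swapP_apply_right] using h
  have hcard : ((invSet n (w * swapP i)).erase (i, i+1)).card = (invSet n w).card := by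
    apply Finset.card_bij' (i := fun p _ => (swapP i p.1, swapP i p.2))
      (j := fun p _ => (swapP i p.1, swapP i p.2))
    · intro p hp
      rw [Finset.mem_erase, mem_invSet] at hp
      obtain ⟨hne, ⟨⟨h11, h12⟩, h21, h22⟩, hlt, hinv⟩ := hp
      have hne' : (p.1, p.2) ≠ (i, i+1) := by simpa [Prod.ext_iff] using hne
      rw [mem_invSet]
      have hm1 : 1 ≤ swapP i p.1 ∧ swapP i p.1 ≤ n :=
        fixesOutside_maps (swapP_fixesOutside hi1 hi2) h11 h12
      have hm2 : 1 ≤ swapP i p.2 ∧ swapP i p.2 ≤ n :=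
        fixesOutside_maps (swapP_fixesOutside hi1 hi2) h21 h22
      refine ⟨⟨hm1, hm2⟩, swapP_mono hlt hne', ?_⟩
      simpa [Equiv.Perm.mul_apply] using hinv
    · intro q hq
      rw [mem_invSet] at hq
      obtain ⟨⟨⟨h11, h12⟩, h21, h22⟩, hlt, hinv⟩ := hq
      have hqne : (q.1, q.2) ≠ (i, i+1) := by
        rintro he
        rw [Prod.ext_iff] at he
        obtain ⟨e1, e2⟩ := he
        simp only at e1 e2
        rw [e1, e2] at hinv
        omega
      rw [Finset.mem_erase, mem_invSet]
      have hm1 : 1 ≤ swapP i q.1 ∧ swapP i q.1 ≤ n :=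
        fixesOutside_maps (swapP_fixesOutside hi1 hi2) h11 h12
      have hm2 : 1 ≤ swapP i q.2 ∧ swapP i q.2 ≤ n :=
        fixesOutside_maps (swapP_fixesOutside hi1 hi2) h21 h22
      refine ⟨?_, ⟨hm1, hm2⟩, swapP_mono hlt hqne, ?_⟩
      · rintro he
        rw [Prod.ext_iff] at he
        obtain ⟨e1, e2⟩ := he
        simp only at e1 e2
        have f1 : q.1 = i + 1 := by
          have := congrArg (swapP i) e1
          rwa [swapP_apply_self, swapP_apply_left] at this
        have f2 : q.2 = i := by
          have := congrArg (swapP i) e2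
          rwa [swapP_apply_self, swapP_apply_right] at this
        omega
      · simpa [Equiv.Perm.mul_apply, swapP_apply_self] using hinv
    · intro p _
      ext <;> simp [swapP_apply_self]
    · intro q _
      ext <;> simp [swapP_apply_self]
  rw [permLength_eq, permLength_eq, ← hcard, Finset.card_erase_add_one hmemA]

lemma permLength_mul_swap' (w : Equiv.Perm ℕ) {n i : ℕ} (hi1 : 1 ≤ i) (hi2 : i < n)
    (h : w (i+1) < w i) : permLength n (w * swapP i) + 1 = permLength n w := by
  have hkey : (w * swapP i) i < (w * swapP i) (i+1) := by
    simpa [Equiv.Perm.mul_apply, swapP_apply_left, swapP_apply_right] using h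
  have := permLength_mul_swap (w * swapP i) hi1 hi2 hkey
  rw [mul_assoc, swapP_mul_self, mul_one] at this
  omega

lemma permLength_mul_le (n : ℕ) (u v : Equiv.Perm ℕ) (hv : FixesOutside v 1 n) :
    permLength n (u * v) ≤ permLength n u + permLength n v := by
  classical
  rw [permLength_eq, permLength_eq, permLength_eq,
    ← Finset.card_filter_add_card_filter_not (s := invSet n (u * v))
      (p := fun p => v p.2 < v p.1)]
  have h1 : ((invSet n (u * v)).filter fun p => v p.2 < v p.1).card ≤ (invSet n v).card := by
    apply Finset.card_le_card
    intro p hp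
    rw [Finset.mem_filter, mem_invSet] at hp
    rw [mem_invSet]
    exact ⟨hp.1.1, hp.1.2.1, hp.2⟩
  have h2 : ((invSet n (u * v)).filter fun p => ¬ v p.2 < v p.1).card ≤ (invSet n u).card := by
    apply Finset.card_le_card_of_injOn (fun p => (v p.1, v p.2))
    · intro p hp
      rw [Finset.mem_coe, Finset.mem_filter, mem_invSet] at hp
      obtain ⟨⟨⟨hb1, hb2⟩, hlt, hinv⟩, hnv⟩ := hp
      rw [Finset.mem_coe, mem_invSet]
      have hm1 := fixesOutside_maps hv hb1.1 hb1.2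
      have hm2 := fixesOutside_maps hv hb2.1 hb2.2
      have hne : v p.1 ≠ v p.2 := fun e => by have := v.injective e; omega
      refine ⟨⟨hm1, hm2⟩, by dsimp only; omega, ?_⟩
      simpa [Equiv.Perm.mul_apply] using hinv
    · intro p _ q _ he
      rw [Prod.ext_iff] at he
      obtain ⟨e1, e2⟩ := he
      simp only at e1 e2
      ext
      · exact v.injective e1
      · exact v.injective e2
  omega

lemma eq_one_of_permLength_zero {n : ℕ} {d : Equiv.Perm ℕ} (hd : FixesOutside d 1 n)
    (h0 : permLength n d = 0) : d = 1 := by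
  have hmono : ∀ p q, 1 ≤ p → q ≤ n → p < q → d p < d q := by
    intro p q hp hq hpq
    by_contra hc
    have hne : d p ≠ d q := fun e => by have := d.injective e; omega
    have hmem : (p, q) ∈ invSet n d := by
      rw [mem_invSet]
      exact ⟨⟨⟨hp, by omega⟩, by omega, hq⟩, hpq, show d q < d p by omega⟩
    rw [permLength_eq, Finset.card_eq_zero] at h0
    rw [h0] at hmem
    exact absurd hmem (Finset.notMem_empty _)
  have hge : ∀ k, 1 ≤ k → k ≤ n → k ≤ d k := by
    intro k
    induction k with
    | zero => omega
    | succ m ih =>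
      intro h1 hn
      rcases Nat.eq_zero_or_pos m with rfl | hm
      · exact (fixesOutside_maps hd (le_refl 1) hn).1
      · have hdm := ih hm (by omega)
        have := hmono m (m+1) hm hn (by omega)
        omega
  have himg : Finset.image (fun k => d k) (Finset.Icc 1 n) = Finset.Icc 1 n := by
    apply Finset.eq_of_subset_of_card_le
    · intro x hx
      rw [Finset.mem_image] at hx
      obtain ⟨k, hk, rfl⟩ := hx
      rw [Finset.mem_Icc] at hk ⊢
      exact fixesOutside_maps hd hk.1 hk.2
    · rw [Finset.card_image_of_injective _ d.injective]
  have hsum : ∑ k ∈ Finset.Icc 1 n, d k = ∑ k ∈ Finset.Icc 1 n, k := by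
    conv_rhs => rw [← himg]
    rw [Finset.sum_image (fun x _ y _ h => d.injective h)]
  have heq : ∀ k ∈ Finset.Icc 1 n, k = d k := by
    refine (Finset.sum_eq_sum_iff_of_le ?_).mp hsum.symm
    intro k hk
    rw [Finset.mem_Icc] at hk
    exact hge k hk.1 hk.2
  ext k
  rcases Nat.lt_or_ge k 1 with hk | hk
  · simpa using hd k (Or.inl hk)
  rcases Nat.lt_or_ge n k with hk2 | hk2
  · simpa using hd k (Or.inr hk2)
  · simpa using (heq k (Finset.mem_Icc.mpr ⟨hk, hk2⟩)).symm

lemma exists_descent {n : ℕ} {d : Equiv.Perm ℕ} (hd : FixesOutside d 1 n) (h0 : d ≠ 1) :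
    ∃ i, 1 ≤ i ∧ i < n ∧ d (i+1) < d i := by
  by_contra hc
  push_neg at hc
  have hstep : ∀ i, 1 ≤ i → i < n → d i < d (i+1) := by
    intro i h1 h2
    have hle := hc i h1 h2
    have hne : d i ≠ d (i+1) := fun e => by have := d.injective e; omega
    omega
  have chain : ∀ q p, 1 ≤ p → q ≤ n → p < q → d p < d q := by
    intro q
    induction q with
    | zero => omega
    | succ m ih =>
      intro p hp hq hpq
      rcases eq_or_lt_of_le (Nat.succ_le_of_lt hpq) with he | hlt
      · have hpm : p = m := by omega
        subst hpm
        exact hstep p hp (by omega)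
      · have h1 := ih p hp (by omega) (by omega)
        have h2 := hstep m (by omega) (by omega)
        omega
  apply h0
  apply eq_one_of_permLength_zero hd
  rw [permLength_eq, Finset.card_eq_zero, invSet, Finset.filter_eq_empty_iff]
  intro p hp
  rw [Finset.mem_product, Finset.mem_Icc, Finset.mem_Icc] at hp
  intro hcon
  have := chain p.2 p.1 hp.1.1 hp.2.2 hcon.1
  omega

end AuxPerm

section AuxHecke

variable {R : Type*} [CommRing R] {A : Type*} [Ring A] [Algebra R A]
  {n ℓ : ℕ} {ξ : R} {Q : ℕ → R}

/-- Product formula: `T_u T_d = T_{ud}` when the lengths add. -/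
lemma Tw_prod (h : Hecke R A n ℓ ξ Q) :
    ∀ (m : ℕ) (d : Equiv.Perm ℕ), permLength n d = m → FixesOutside d 1 n →
      ∀ u : Equiv.Perm ℕ, permLength n (u * d) = permLength n u + permLength n d →
      h.Tw (u * d) = h.Tw u * h.Tw d := by
  intro m
  induction m using Nat.strong_induction_on with
  | _ m IH =>
    intro d hdm hd u hlen
    rcases Nat.eq_zero_or_pos m with rfl | hpos
    · have hd1 : d = 1 := eq_one_of_permLength_zero hd hdm
      subst hd1
      rw [mul_one, h.Tw_one, mul_one]
    · have hne : d ≠ 1 := by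
        rintro rfl
        rw [permLength_one] at hdm
        omega
      obtain ⟨i, hi1, hi2, hdes⟩ := exists_descent hd hne
      set d' := d * swapP i with hd'def
      have hdd : d' * swapP i = d := by
        rw [hd'def, mul_assoc, swapP_mul_self, mul_one]
      have hd'i : d' i = d (i+1) := by
        rw [hd'def, Equiv.Perm.mul_apply, swapP_apply_left]
      have hd'i1 : d' (i+1) = d i := by
        rw [hd'def, Equiv.Perm.mul_apply, swapP_apply_right]
      have hlen' : permLength n d' + 1 = permLength n d := by
        have := permLength_mul_swap d' hi1 hi2 (by rw [hd'i, hd'i1]; exact hdes)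
        rw [hdd] at this
        omega
      have hd'fix : FixesOutside d' 1 n :=
        fixesOutside_mul hd (swapP_fixesOutside hi1 hi2)
      have hsub : permLength n (u * d') ≤ permLength n u + permLength n d' :=
        permLength_mul_le n u d' hd'fix
      have hud : u * d' * swapP i = u * d := by rw [mul_assoc, hdd]
      have hcase : (u * d') i < (u * d') (i+1) := by
        by_contra hle
        have hne2 : (u * d') i ≠ (u * d') (i+1) :=
          fun e => by have := (u * d').injective e; omega
        have hlt : (u * d') (i+1) < (u * d') i := by omega
        have hbad := permLength_mul_swap' (u * d') hi1 hi2 hlt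
        rw [hud] at hbad
        omega
      have hud_len : permLength n (u * d') = permLength n u + permLength n d' := by
        have := permLength_mul_swap (u * d') hi1 hi2 hcase
        rw [hud] at this
        omega
      have hIH : h.Tw (u * d') = h.Tw u * h.Tw d' :=
        IH (permLength n d') (by omega) d' rfl hd'fix u hud_len
      have h1 : h.Tw d = h.Tw d' * h.T i := by
        have := h.Tw_mul d' i hi1 hi2 (by rw [hdd]; omega)
        rw [hdd] at this
        exact this
      have h2 : h.Tw (u * d) = h.Tw (u * d') * h.T i := by
        have := h.Tw_mul (u * d') i hi1 hi2 (by rw [hud]; omega)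
        rw [hud] at this
        exact this
      rw [h2, hIH, h1, mul_assoc]

lemma youngMem_finite (n : ℕ) (tpos : ℕ → Node) :
    {w : Equiv.Perm ℕ | YoungMem n tpos w}.Finite := by
  classical
  have hsub : {w : Equiv.Perm ℕ | YoungMem n tpos w} ⊆
      {w : Equiv.Perm ℕ | FixesOutside w 1 n} := fun w hw => hw.1
  refine Set.Finite.subset ?_ hsub
  set F : Equiv.Perm ℕ → (Fin (n+1) → Fin (n+1)) :=
    fun w j => if hle : w j.val ≤ n then ⟨w j.val, by omega⟩ else ⟨0, by omega⟩ with hF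
  apply Set.Finite.of_finite_image (f := F) (Set.toFinite _)
  intro w hw w' hw' he
  have hval : ∀ k, k ≤ n → w k = w' k := by
    intro k hk
    rcases Nat.eq_zero_or_pos k with rfl | hk1
    · rw [hw 0 (Or.inl (by omega)), hw' 0 (Or.inl (by omega))]
    · have h1 := fixesOutside_maps hw hk1 hk
      have h2 := fixesOutside_maps hw' hk1 hk
      have := congrFun he ⟨k, by omega⟩
      simp only [hF] at this
      rw [dif_pos h1.2, dif_pos h2.2] at this
      exact congrArg Fin.val this
  ext k
  rcases Nat.lt_or_ge n k with hk | hk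
  · rw [hw k (Or.inr hk), hw' k (Or.inr hk)]
  · exact hval k hk

lemma xElt_eq_sum (h : Hecke R A n ℓ ξ Q) (tpos : ℕ → Node) :
    h.xElt tpos = ∑ w ∈ (youngMem_finite n tpos).toFinset, h.Tw w := by
  rw [Hecke.xElt, ← finsum_mem_coe_finset]
  have hco : (↑(youngMem_finite n tpos).toFinset : Set (Equiv.Perm ℕ))
      = {w : Equiv.Perm ℕ | YoungMem n tpos w} := Set.Finite.coe_toFinset _
  rw [hco]
  rfl

lemma mul_T_sq (h : Hecke R A n ℓ ξ Q) {i : ℕ} (hi1 : 1 ≤ i) (hi2 : i < n) (X : A) :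
    X * (h.T i * h.T i) = ξ • X + (ξ - 1) • (X * h.T i) := by
  have hq := h.quad i hi1 hi2
  have hTT : h.T i * h.T i
      = h.T i * algebraMap R A ξ - h.T i + algebraMap R A ξ := by
    have hx : h.T i * h.T i - (h.T i * algebraMap R A ξ - h.T i + algebraMap R A ξ)
        = (h.T i + 1) * (h.T i - algebraMap R A ξ) := by noncomm_ring
    exact sub_eq_zero.mp (hx.trans hq)
  rw [hTT, Algebra.smul_def, Algebra.smul_def, map_sub, map_one, sub_mul, one_mul,
    Algebra.commutes ξ X, Algebra.commutes ξ (X * h.T i)]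
  rw [mul_add, mul_sub, ← mul_assoc]
  abel

lemma youngMem_mul {n : ℕ} {tpos : ℕ → Node} {u w : Equiv.Perm ℕ}
    (hu : YoungMem n tpos u) (hw : YoungMem n tpos w) : YoungMem n tpos (u * w) := by
  refine ⟨fixesOutside_mul hu.1 hw.1, fun k hk1 hk2 => ?_⟩
  have hwk := fixesOutside_maps hw.1 hk1 hk2
  have h1 := hu.2 (w k) hwk.1 hwk.2
  have h2 := hw.2 k hk1 hk2
  rw [Equiv.Perm.mul_apply]
  exact ⟨h1.1.trans h2.1, h1.2.trans h2.2⟩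

end AuxHecke

section AuxTab

lemma sum_card_filter_eq {α : Type*} (s : Finset α) (q : α → ℕ) (L : ℕ) :
    ∑ k ∈ Finset.range L, (s.filter fun x => q x = k).card
      = (s.filter fun x => q x < L).card := by
  classical
  induction L with
  | zero => simp
  | succ m ih =>
    rw [Finset.sum_range_succ, ih]
    have hsplit : (s.filter fun x => q x < m + 1)
        = (s.filter fun x => q x < m) ∪ (s.filter fun x => q x = m) := by
      rw [← Finset.filter_or]
      apply Finset.filter_congr
      intro x _
      constructor
      · intro hx; omega
      · intro hx; omega
    rw [hsplit, Finset.card_union_of_disjoint]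
    rw [Finset.disjoint_left]
    intro a ha hb
    rw [Finset.mem_filter] at ha hb
    omega

lemma tabPsum_eq_card (pos : ℕ → Node) (m l i : ℕ) :
    tabPsum pos m l i = ((Finset.Icc 1 m).filter fun k =>
      (pos k).1 < l ∨ ((pos k).1 = l ∧ (pos k).2.1 < i)).card := by
  classical
  rw [tabPsum]
  have h1 : ∑ k ∈ Finset.range l, compcnt pos m k
      = ((Finset.Icc 1 m).filter fun k => (pos k).1 < l).card := by
    simpa [compcnt] using sum_card_filter_eq (Finset.Icc 1 m) (fun k => (pos k).1) l
  have h2 : ∑ j ∈ Finset.range i, cnt pos m l j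
      = ((Finset.Icc 1 m).filter fun k => (pos k).1 = l ∧ (pos k).2.1 < i).card := by
    have h3 := sum_card_filter_eq ((Finset.Icc 1 m).filter fun k => (pos k).1 = l)
      (fun k => (pos k).2.1) i
    simpa [cnt, Finset.filter_filter] using h3
  rw [h1, h2, ← Finset.card_union_of_disjoint, ← Finset.filter_or]
  rw [Finset.disjoint_left]
  intro a ha hb
  rw [Finset.mem_filter] at ha hb
  omega

lemma actTab_swap_left (v : ℕ → Node) (i : ℕ) : actTab v (swapP i) i = v (i+1) := by
  rw [actTab, swapP_apply_left]

lemma actTab_swap_right (v : ℕ → Node) (i : ℕ) : actTab v (swapP i) (i+1) = v i := by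
  rw [actTab, swapP_apply_right]

lemma actTab_swap_of_ne (v : ℕ → Node) {i k : ℕ} (h1 : k ≠ i) (h2 : k ≠ i + 1) :
    actTab v (swapP i) k = v k := by
  rw [actTab, swapP_apply_of_ne _ _ h1 h2]

/-- If the node of `i+1` lies in a strictly earlier row than the node of `i`,
then dominance of `v` over `v·s_i` fails at `m = i`. -/
lemma psum_swap_lt (v : ℕ → Node) {i : ℕ} (hi : 1 ≤ i)
    (hrb : (v (i+1)).1 < (v i).1 ∨
      ((v (i+1)).1 = (v i).1 ∧ (v (i+1)).2.1 < (v i).2.1)) :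
    ∃ l j, tabPsum v i l j < tabPsum (actTab v (swapP i)) i l j := by
  classical
  set l : ℕ := if (v (i+1)).1 < (v i).1 then (v (i+1)).1 + 1 else (v i).1 with hl
  set j : ℕ := if (v (i+1)).1 < (v i).1 then 0 else (v (i+1)).2.1 + 1 with hj
  refine ⟨l, j, ?_⟩
  have hPy : (v (i+1)).1 < l ∨ ((v (i+1)).1 = l ∧ (v (i+1)).2.1 < j) := by
    simp only [hl, hj]
    split <;> omega
  have hPx : ¬ ((v i).1 < l ∨ ((v i).1 = l ∧ (v i).2.1 < j)) := by
    simp only [hl, hj]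
    split <;> omega
  rw [tabPsum_eq_card, tabPsum_eq_card]
  apply Finset.card_lt_card
  have hsub : ((Finset.Icc 1 i).filter fun k =>
        (v k).1 < l ∨ ((v k).1 = l ∧ (v k).2.1 < j))
      ⊆ (Finset.Icc 1 i).filter fun k =>
        (actTab v (swapP i) k).1 < l ∨ ((actTab v (swapP i) k).1 = l
          ∧ (actTab v (swapP i) k).2.1 < j) := by
    intro k hk
    rw [Finset.mem_filter] at hk ⊢
    refine ⟨hk.1, ?_⟩
    rcases eq_or_ne k i with rfl | hne
    · exact absurd hk.2 hPx
    · have hkI := Finset.mem_Icc.mp hk.1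
      rw [actTab_swap_of_ne v hne (by omega)]
      exact hk.2
  rw [Finset.ssubset_iff_of_subset hsub]
  refine ⟨i, ?_, ?_⟩
  · rw [Finset.mem_filter, actTab_swap_left]
    exact ⟨Finset.mem_Icc.mpr ⟨hi, le_refl i⟩, hPy⟩
  · rw [Finset.mem_filter]
    rintro ⟨-, hbad⟩
    exact hPx hbad

/-- If the node of `i` lies in a strictly earlier row than the node of `i+1`,
then dominance of `v·s_i` over `v` fails at `m = i`. -/
lemma psum_swap_lt' (v : ℕ → Node) {i : ℕ} (hi : 1 ≤ i)
    (hrb : (v i).1 < (v (i+1)).1 ∨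
      ((v i).1 = (v (i+1)).1 ∧ (v i).2.1 < (v (i+1)).2.1)) :
    ∃ l j, tabPsum (actTab v (swapP i)) i l j < tabPsum v i l j := by
  classical
  set l : ℕ := if (v i).1 < (v (i+1)).1 then (v i).1 + 1 else (v (i+1)).1 with hl
  set j : ℕ := if (v i).1 < (v (i+1)).1 then 0 else (v i).2.1 + 1 with hj
  refine ⟨l, j, ?_⟩
  have hPx : (v i).1 < l ∨ ((v i).1 = l ∧ (v i).2.1 < j) := by
    simp only [hl, hj]
    split <;> omega
  have hPy : ¬ ((v (i+1)).1 < l ∨ ((v (i+1)).1 = l ∧ (v (i+1)).2.1 < j)) := by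
    simp only [hl, hj]
    split <;> omega
  rw [tabPsum_eq_card, tabPsum_eq_card]
  apply Finset.card_lt_card
  have hsub : ((Finset.Icc 1 i).filter fun k =>
        (actTab v (swapP i) k).1 < l ∨ ((actTab v (swapP i) k).1 = l
          ∧ (actTab v (swapP i) k).2.1 < j))
      ⊆ (Finset.Icc 1 i).filter fun k =>
        (v k).1 < l ∨ ((v k).1 = l ∧ (v k).2.1 < j) := by
    intro k hk
    rw [Finset.mem_filter] at hk ⊢
    refine ⟨hk.1, ?_⟩
    rcases eq_or_ne k i with rfl | hne
    · rw [actTab_swap_left] at hk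
      exact absurd hk.2 hPy
    · have hkI := Finset.mem_Icc.mp hk.1
      rw [actTab_swap_of_ne v hne (by omega)] at hk
      exact hk.2
  rw [Finset.ssubset_iff_of_subset hsub]
  refine ⟨i, ?_, ?_⟩
  · rw [Finset.mem_filter]
    exact ⟨Finset.mem_Icc.mpr ⟨hi, le_refl i⟩, hPx⟩
  · rw [Finset.mem_filter, actTab_swap_left]
    rintro ⟨-, hbad⟩
    exact hPy hbad

end AuxTab

section AuxYoung

variable {ℓc n : ℕ} {nu : Multicomp ℓc n} {tnu v : ℕ → Node} {dv : Equiv.Perm ℕ}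

/-- If `b < a` and their nodes in the row reading tableau lie in different rows,
then any row-preserving permutation preserves the order. -/
lemma young_order (htnu : IsRowReading nu tnu) {w : Equiv.Perm ℕ}
    (hw : YoungMem n tnu w) {a b : ℕ} (ha1 : 1 ≤ a) (ha2 : a ≤ n)
    (hb1 : 1 ≤ b) (hb2 : b ≤ n) (hba : b < a)
    (hrows : ¬((tnu b).1 = (tnu a).1 ∧ (tnu b).2.1 = (tnu a).2.1)) :
    w b < w a := by
  have hlex : nodeLex (tnu b) (tnu a) := (htnu.2 b a hb1 hb2 ha1 ha2).mp hba
  have hwb := fixesOutside_maps hw.1 hb1 hb2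
  have hwa := fixesOutside_maps hw.1 ha1 ha2
  have hrb := hw.2 b hb1 hb2
  have hra := hw.2 a ha1 ha2
  apply (htnu.2 (w b) (w a) hwb.1 hwb.2 hwa.1 hwa.2).mpr
  simp only [nodeLex] at hlex ⊢
  obtain ⟨hrb1, hrb2⟩ := hrb
  obtain ⟨hra1, hra2⟩ := hra
  omega

/-- Entries out of order in a row-preserving permutation lie in the same row,
in increasing column order. -/
lemma young_sameRow (htnu : IsRowReading nu tnu) {w : Equiv.Perm ℕ}
    (hw : YoungMem n tnu w) {a b : ℕ} (ha1 : 1 ≤ a) (ha2 : a ≤ n)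
    (hb1 : 1 ≤ b) (hb2 : b ≤ n) (hab : a < b) (hinv : w b < w a) :
    (tnu a).1 = (tnu b).1 ∧ (tnu a).2.1 = (tnu b).2.1 ∧ (tnu a).2.2 < (tnu b).2.2 := by
  by_cases hrows : (tnu a).1 = (tnu b).1 ∧ (tnu a).2.1 = (tnu b).2.1
  · have hlex : nodeLex (tnu a) (tnu b) := (htnu.2 a b ha1 ha2 hb1 hb2).mp hab
    simp only [nodeLex] at hlex
    exact ⟨hrows.1, hrows.2, by omega⟩
  · have := young_order htnu hw hb1 hb2 ha1 ha2 hab hrows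
    omega

/-- Lengths add when multiplying a Young-subgroup element by the distinguished
coset representative of a row standard tableau. -/
lemma young_dperm_length_add (htnu : IsRowReading nu tnu) (hv : RowStandard nu v)
    (hdv : IsDPerm n tnu v dv) {w : Equiv.Perm ℕ} (hw : YoungMem n tnu w) :
    permLength n (w * dv) = permLength n w + permLength n dv := by
  classical
  rw [permLength_eq, permLength_eq, permLength_eq,
    ← Finset.card_filter_add_card_filter_not (s := invSet n (w * dv))
      (p := fun p => dv p.2 < dv p.1)]
  have hA : (invSet n (w * dv)).filter (fun p => dv p.2 < dv p.1) = invSet n dv := by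
    ext p
    rw [Finset.mem_filter, mem_invSet, mem_invSet]
    constructor
    · rintro ⟨⟨hb, hlt, _⟩, hq⟩
      exact ⟨hb, hlt, hq⟩
    · rintro ⟨hb, hlt, hq⟩
      refine ⟨⟨hb, hlt, ?_⟩, hq⟩
      obtain ⟨⟨h11, h12⟩, h21, h22⟩ := hb
      have hm1 := fixesOutside_maps hdv.1 h11 h12
      have hm2 := fixesOutside_maps hdv.1 h21 h22
      have hrows : ¬((tnu (dv p.2)).1 = (tnu (dv p.1)).1
          ∧ (tnu (dv p.2)).2.1 = (tnu (dv p.1)).2.1) := by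
        rintro ⟨hc1, hc2⟩
        have hlex : nodeLex (tnu (dv p.2)) (tnu (dv p.1)) :=
          (htnu.2 (dv p.2) (dv p.1) hm2.1 hm2.2 hm1.1 hm1.2).mp hq
        simp only [nodeLex] at hlex
        have hcol : (tnu (dv p.2)).2.2 < (tnu (dv p.1)).2.2 := by omega
        have hv1 : v p.1 = tnu (dv p.1) := hdv.2 p.1 h11 h12
        have hv2 : v p.2 = tnu (dv p.2) := hdv.2 p.2 h21 h22
        have := hv.2 p.2 p.1 h21 h22 h11 h12 (by rw [hv1, hv2]; exact hc1)
          (by rw [hv1, hv2]; exact hc2) (by rw [hv1, hv2]; exact hcol)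
        omega
      have := young_order htnu hw hm1.1 hm1.2 hm2.1 hm2.2 hq hrows
      simpa [Equiv.Perm.mul_apply] using this
  have hB : ((invSet n (w * dv)).filter (fun p => ¬ dv p.2 < dv p.1)).card
      = (invSet n w).card := by
    apply Finset.card_bij' (i := fun p _ => (dv p.1, dv p.2))
      (j := fun q _ => (dv⁻¹ q.1, dv⁻¹ q.2))
    · intro p hp
      rw [Finset.mem_filter, mem_invSet] at hp
      obtain ⟨⟨⟨⟨h11, h12⟩, h21, h22⟩, hlt, hinv⟩, hq⟩ := hp
      rw [mem_invSet]
      have hm1 := fixesOutside_maps hdv.1 h11 h12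
      have hm2 := fixesOutside_maps hdv.1 h21 h22
      have hne : dv p.1 ≠ dv p.2 := fun e => by have := dv.injective e; omega
      refine ⟨⟨hm1, hm2⟩, by omega, ?_⟩
      simpa [Equiv.Perm.mul_apply] using hinv
    · intro q hq
      rw [mem_invSet] at hq
      obtain ⟨⟨⟨h11, h12⟩, h21, h22⟩, hlt, hinv⟩ := hq
      rw [Finset.mem_filter, mem_invSet]
      have hm1 := fixesOutside_maps (fixesOutside_inv hdv.1) h11 h12
      have hm2 := fixesOutside_maps (fixesOutside_inv hdv.1) h21 h22
      have ha1 : dv (dv⁻¹ q.1) = q.1 := Equiv.apply_symm_apply dv q.1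
      have ha2 : dv (dv⁻¹ q.2) = q.2 := Equiv.apply_symm_apply dv q.2
      have hsr := young_sameRow htnu hw h11 h12 h21 h22 hlt hinv
      have hv1 : v (dv⁻¹ q.1) = tnu q.1 := by rw [hdv.2 _ hm1.1 hm1.2, ha1]
      have hv2 : v (dv⁻¹ q.2) = tnu q.2 := by rw [hdv.2 _ hm2.1 hm2.2, ha2]
      have hplt : dv⁻¹ q.1 < dv⁻¹ q.2 :=
        hv.2 _ _ hm1.1 hm1.2 hm2.1 hm2.2 (by rw [hv1, hv2]; exact hsr.1)
          (by rw [hv1, hv2]; exact hsr.2.1) (by rw [hv1, hv2]; exact hsr.2.2)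
      refine ⟨⟨⟨hm1, hm2⟩, hplt, ?_⟩, ?_⟩
      · simp only [Equiv.Perm.mul_apply, ha1, ha2]
        exact hinv
      · simp only [ha1, ha2]
        omega
    · intro p _
      ext <;> simp [Equiv.Perm.inv_def]
    · intro q _
      ext <;> simp [Equiv.Perm.inv_def]
  rw [hA, hB]
  omega

/-- If entries `i`, `i+1` of a row standard tableau are in different rows,
the swapped tableau is still row standard. -/
lemma rowStandard_swap (hv : RowStandard nu v) {i : ℕ} (hi1 : 1 ≤ i) (hi2 : i < n)
    (hdiff : ¬((v i).1 = (v (i+1)).1 ∧ (v i).2.1 = (v (i+1)).2.1)) :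
    RowStandard nu (actTab v (swapP i)) := by
  have hbounds : ∀ k, 1 ≤ k → k ≤ n → 1 ≤ swapP i k ∧ swapP i k ≤ n :=
    fun k hk1 hk2 => fixesOutside_maps (swapP_fixesOutside hi1 hi2) hk1 hk2
  constructor
  · refine ⟨?_, ?_, ?_⟩
    · intro j k hj1 hj2 hk1 hk2 he
      have hj' := hbounds j hj1 hj2
      have hk' := hbounds k hk1 hk2
      have := hv.1.1 _ _ hj'.1 hj'.2 hk'.1 hk'.2 he
      exact (swapP i).injective this
    · intro k hk1 hk2
      have hk' := hbounds k hk1 hk2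
      exact hv.1.2.1 _ hk'.1 hk'.2
    · intro x hx
      obtain ⟨k, hk1, hk2, hvk⟩ := hv.1.2.2 x hx
      have hk' := hbounds k hk1 hk2
      refine ⟨swapP i k, hk'.1, hk'.2, ?_⟩
      show v (swapP i (swapP i k)) = x
      rw [swapP_apply_self]
      exact hvk
  · intro j k hj1 hj2 hk1 hk2 hcomp hrow hcol
    simp only [actTab] at hcomp hrow hcol
    have hj' := hbounds j hj1 hj2
    have hk' := hbounds k hk1 hk2
    have hlt := hv.2 _ _ hj'.1 hj'.2 hk'.1 hk'.2 hcomp hrow hcol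
    by_contra hjk
    rcases eq_or_ne j k with rfl | hne
    · omega
    · have hkj : k < j := by omega
      rcases eq_or_ne (k, j) (i, i+1) with he | hne2
      · rw [Prod.ext_iff] at he
        obtain ⟨e1, e2⟩ := he
        simp only at e1 e2
        subst e1
        subst e2
        rw [swapP_apply_left] at hcomp hrow
        rw [swapP_apply_right] at hcomp hrow
        exact hdiff ⟨hcomp, hrow⟩
      · exact absurd (swapP_mono hkj hne2) (by omega)

end AuxYoung

/-- permutation module relations.  In the (Iwahori–)Hecke algebra,
`x_ν T_{d(v)} T_i` equals `ξ x_ν T_{d(v)}` if `v s_i` is not row standard;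
`x_ν T_{d(v) s_i}` if `v ⊳ v s_i` is row standard; and
`ξ x_ν T_{d(v) s_i} + (ξ - 1) x_ν T_{d(v)}` if `v s_i ⊳ v` is row standard. -/
theorem statement10 {R : Type*} [CommRing R] [IsDomain R] {A : Type*} [Ring A]
    [Algebra R A] {n ℓ : ℕ} {ξ : R} {Q : ℕ → R} (h : Hecke R A n ℓ ξ Q)
    (nu : Multicomp ℓ n) (tnu v : ℕ → Node) (htnu : IsRowReading nu tnu)
    (hv : RowStandard nu v) (dv : Equiv.Perm ℕ) (hdv : IsDPerm n tnu v dv)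
    (i : ℕ) (hi1 : 1 ≤ i) (hi2 : i < n) :
    (¬ RowStandard nu (actTab v (swapP i)) →
      h.xElt tnu * h.Tw dv * h.T i = ξ • (h.xElt tnu * h.Tw dv)) ∧
    (RowStandard nu (actTab v (swapP i)) → TabDominates n v (actTab v (swapP i)) →
      (∃ k, 1 ≤ k ∧ k ≤ n ∧ actTab v (swapP i) k ≠ v k) →
      h.xElt tnu * h.Tw dv * h.T i = h.xElt tnu * h.Tw (dv * swapP i)) ∧
    (RowStandard nu (actTab v (swapP i)) → TabDominates n (actTab v (swapP i)) v →
      (∃ k, 1 ≤ k ∧ k ≤ n ∧ actTab v (swapP i) k ≠ v k) →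
      h.xElt tnu * h.Tw dv * h.T i =
        ξ • (h.xElt tnu * h.Tw (dv * swapP i)) + (ξ - 1) • (h.xElt tnu * h.Tw dv)) := by
  classical
  have hvTab := hv.1
  have hord := htnu.2
  have hdi := fixesOutside_maps hdv.1 (show 1 ≤ i by omega) (show i ≤ n by omega)
  have hdi1 := fixesOutside_maps hdv.1 (show 1 ≤ i + 1 by omega) (show i + 1 ≤ n by omega)
  have hxv : v i = tnu (dv i) := hdv.2 i (by omega) (by omega)
  have hyv : v (i+1) = tnu (dv (i+1)) := hdv.2 (i+1) (by omega) (by omega)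
  have hvne : v i ≠ v (i+1) := by
    intro he
    have := hvTab.1 i (i+1) (by omega) (by omega) (by omega) (by omega) he
    omega
  have hdvne : dv i ≠ dv (i+1) := fun e => by have := dv.injective e; omega
  refine ⟨?_, ?_, ?_⟩
  · -- Case 1 : `v s_i` is not row standard
    intro hns
    have hsame : (v i).1 = (v (i+1)).1 ∧ (v i).2.1 = (v (i+1)).2.1 := by
      by_contra hdiff
      exact hns (rowStandard_swap hv hi1 hi2 hdiff)
    have hcol : (v i).2.2 < (v (i+1)).2.2 := by
      rcases lt_trichotomy ((v i).2.2) ((v (i+1)).2.2) with hc | hc | hc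
      · exact hc
      · exact absurd (Prod.ext hsame.1 (Prod.ext hsame.2 hc)) hvne
      · have := hv.2 (i+1) i (by omega) (by omega) (by omega) (by omega)
          hsame.1.symm hsame.2.symm hc
        omega
    have hadj : (v (i+1)).2.2 = (v i).2.2 + 1 := by
      by_contra hne2
      have hlt2 : (v i).2.2 + 1 < (v (i+1)).2.2 := by omega
      have hmemz : nu.mem ((v i).1, (v i).2.1, (v i).2.2 + 1) := by
        have hy := hvTab.2.1 (i+1) (by omega) (by omega)
        rw [Multicomp.mem] at hy ⊢
        simp only
        rw [hsame.1, hsame.2]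
        omega
      obtain ⟨k, hk1, hk2, hvk⟩ := hvTab.2.2 _ hmemz
      have hik : i < k := hv.2 i k (by omega) (by omega) hk1 hk2
        (by rw [hvk]) (by rw [hvk])
        (by rw [hvk]; show (v i).2.2 < (v i).2.2 + 1; omega)
      have hki : k < i + 1 := hv.2 k (i+1) hk1 hk2 (by omega) (by omega)
        (by rw [hvk]; exact hsame.1) (by rw [hvk]; exact hsame.2)
        (by rw [hvk]; show (v i).2.2 + 1 < (v (i+1)).2.2; omega)
      omega
    have hlexxy : nodeLex (tnu (dv i)) (tnu (dv (i+1))) := by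
      rw [← hxv, ← hyv]
      simp only [nodeLex]
      omega
    have hdlt : dv i < dv (i+1) := (hord _ _ hdi.1 hdi.2 hdi1.1 hdi1.2).mpr hlexxy
    have haa : dv (i+1) = dv i + 1 := by
      by_contra hne2
      have hmid : dv i + 1 < dv (i+1) := by omega
      have hb1 : 1 ≤ dv i + 1 := by omega
      have hb2 : dv i + 1 ≤ n := by omega
      have hl1 : nodeLex (tnu (dv i)) (tnu (dv i + 1)) :=
        (hord _ _ hdi.1 hdi.2 hb1 hb2).mp (by omega)
      have hl2 : nodeLex (tnu (dv i + 1)) (tnu (dv (i+1))) :=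
        (hord _ _ hb1 hb2 hdi1.1 hdi1.2).mp hmid
      rw [← hxv] at hl1
      rw [← hyv] at hl2
      simp only [nodeLex] at hl1 hl2
      omega
    have hb2 : dv i + 1 ≤ n := by omega
    have hrowsa : (tnu (dv i)).1 = (tnu (dv i + 1)).1
        ∧ (tnu (dv i)).2.1 = (tnu (dv i + 1)).2.1 := by
      rw [← hxv, ← haa, ← hyv]
      exact hsame
    have hyra : YoungMem n tnu (swapP (dv i)) := by
      constructor
      · intro k hk
        exact swapP_apply_of_ne _ _ (by omega) (by omega)
      · intro k hk1 hk2
        rcases eq_or_ne k (dv i) with rfl | h1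
        · rw [swapP_apply_left]
          exact ⟨hrowsa.1.symm, hrowsa.2.symm⟩
        rcases eq_or_ne k (dv i + 1) with rfl | h2
        · rw [swapP_apply_right]
          exact ⟨hrowsa.1, hrowsa.2⟩
        · rw [swapP_apply_of_ne _ _ h1 h2]
          exact ⟨rfl, rfl⟩
    have hperm : dv * swapP i = swapP (dv i) * dv := by
      apply Equiv.ext
      intro k
      rw [Equiv.Perm.mul_apply, Equiv.Perm.mul_apply]
      rcases eq_or_ne k i with rfl | h1
      · rw [swapP_apply_left, swapP_apply_left]
        exact haa
      rcases eq_or_ne k (i+1) with rfl | h2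
      · rw [swapP_apply_right, haa, swapP_apply_right]
      · rw [swapP_apply_of_ne _ _ h1 h2,
          swapP_apply_of_ne _ _ (fun e => h1 (dv.injective e))
            (fun e => h2 (by rw [← haa] at e; exact dv.injective e))]
    rw [xElt_eq_sum h tnu]
    set S := (youngMem_finite n tnu).toFinset with hSdef
    have hmemS : ∀ w : Equiv.Perm ℕ, w ∈ S ↔ YoungMem n tnu w := by
      intro w
      rw [hSdef, Set.Finite.mem_toFinset]
      exact Iff.rfl
    have hprod : ∀ w ∈ S, h.Tw w * h.Tw dv = h.Tw (w * dv) := fun w hw =>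
      (Tw_prod h (permLength n dv) dv rfl hdv.1 w
        (young_dperm_length_add htnu hv hdv ((hmemS w).mp hw))).symm
    simp only [Finset.sum_mul]
    have hL : ∑ w ∈ S, h.Tw w * h.Tw dv * h.T i = ∑ w ∈ S, h.Tw (w * dv) * h.T i :=
      Finset.sum_congr rfl (fun w hw => by rw [hprod w hw])
    have hR : ∑ w ∈ S, h.Tw w * h.Tw dv = ∑ w ∈ S, h.Tw (w * dv) :=
      Finset.sum_congr rfl (fun w hw => by rw [hprod w hw])
    rw [hL, hR]
    -- pairing
    set a := dv i with hadef
    set σ : Equiv.Perm ℕ → Equiv.Perm ℕ := fun w => w * swapP a with hσdef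
    set gp : Equiv.Perm ℕ → Prop := fun w => w a < w (a + 1) with hgpdef
    have hσσ : ∀ w, σ (σ w) = w := by
      intro w
      rw [hσdef]
      simp only
      rw [mul_assoc, swapP_mul_self, mul_one]
    have happ1 : ∀ w : Equiv.Perm ℕ, (σ w) a = w (a + 1) := by
      intro w
      rw [hσdef]
      simp only
      rw [Equiv.Perm.mul_apply, swapP_apply_left]
    have happ2 : ∀ w : Equiv.Perm ℕ, (σ w) (a + 1) = w a := by
      intro w
      rw [hσdef]
      simp only
      rw [Equiv.Perm.mul_apply, swapP_apply_right]
    have hσS : ∀ w ∈ S, σ w ∈ S := fun w hw =>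
      (hmemS _).mpr (youngMem_mul ((hmemS w).mp hw) hyra)
    have hgpne : ∀ w : Equiv.Perm ℕ, w a ≠ w (a + 1) :=
      fun w e => by have := w.injective e; omega
    have hgpσ : ∀ w, ¬ gp w → gp (σ w) := by
      intro w hng
      rw [hgpdef]
      simp only
      rw [happ1, happ2]
      rw [hgpdef] at hng
      simp only at hng
      have := hgpne w
      omega
    have hkey : ∀ w : Equiv.Perm ℕ, gp w → h.Tw (w * dv) * h.T i = h.Tw (σ w * dv) := by
      intro w hg
      have hlt : (w * dv) i < (w * dv) (i+1) := by
        rw [Equiv.Perm.mul_apply, Equiv.Perm.mul_apply, haa]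
        exact hg
      have hlen := permLength_mul_swap (w * dv) hi1 hi2 hlt
      have heq : w * dv * swapP i = σ w * dv := by
        rw [hσdef]
        simp only
        rw [mul_assoc, hperm, ← mul_assoc]
      have := h.Tw_mul (w * dv) i hi1 hi2 (by omega)
      rw [heq] at this
      exact this.symm
    calc ∑ w ∈ S, h.Tw (w * dv) * h.T i
        = ∑ w ∈ S.filter gp, h.Tw (w * dv) * h.T i
            + ∑ w ∈ S.filter (fun w => ¬ gp w), h.Tw (w * dv) * h.T i :=
          (Finset.sum_filter_add_sum_filter_not S gp _).symm
      _ = ∑ w ∈ S.filter gp, h.Tw (w * dv) * h.T i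
            + ∑ w ∈ S.filter gp, h.Tw (σ w * dv) * h.T i := by
          congr 1
          apply Finset.sum_nbij' (i := σ) (j := σ)
          · intro w hw
            rw [Finset.mem_filter] at hw ⊢
            exact ⟨hσS w hw.1, hgpσ w hw.2⟩
          · intro w hw
            rw [Finset.mem_filter] at hw ⊢
            refine ⟨hσS w hw.1, ?_⟩
            intro hg
            have h1 : (σ w) a < (σ w) (a+1) := hg
            rw [happ1, happ2] at h1
            rw [hgpdef] at hw
            simp only at hw
            omega
          · intro w _
            exact hσσ w
          · intro w _
            exact hσσ w
          · intro w _
            exact (congrArg (fun u => h.Tw (u * dv) * h.T i) (hσσ w)).symm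
      _ = ∑ w ∈ S.filter gp, (h.Tw (w * dv) * h.T i + h.Tw (σ w * dv) * h.T i) :=
          Finset.sum_add_distrib.symm
      _ = ∑ w ∈ S.filter gp, (ξ • h.Tw (w * dv) + ξ • h.Tw (σ w * dv)) := by
          apply Finset.sum_congr rfl
          intro w hw
          rw [Finset.mem_filter] at hw
          have e1 := hkey w hw.2
          have e2 : h.Tw (σ w * dv) * h.T i = h.Tw (w * dv) * (h.T i * h.T i) := by
            rw [← e1, mul_assoc]
          rw [e1, e2, mul_T_sq h hi1 hi2, e1]
          module
      _ = ∑ w ∈ S.filter gp, ξ • h.Tw (w * dv)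
            + ∑ w ∈ S.filter gp, ξ • h.Tw (σ w * dv) := Finset.sum_add_distrib
      _ = ∑ w ∈ S.filter gp, ξ • h.Tw (w * dv)
            + ∑ w ∈ S.filter (fun w => ¬ gp w), ξ • h.Tw (w * dv) := by
          congr 1
          apply Finset.sum_nbij' (i := σ) (j := σ)
          · intro w hw
            rw [Finset.mem_filter] at hw ⊢
            refine ⟨hσS w hw.1, ?_⟩
            intro hg
            have h1 : (σ w) a < (σ w) (a+1) := hg
            rw [happ1, happ2] at h1
            rw [hgpdef] at hw
            simp only at hw
            omega
          · intro w hw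
            rw [Finset.mem_filter] at hw ⊢
            exact ⟨hσS w hw.1, hgpσ w hw.2⟩
          · intro w _
            exact hσσ w
          · intro w _
            exact hσσ w
          · intro w _
            rfl
      _ = ξ • ∑ w ∈ S, h.Tw (w * dv) := by
          rw [← Finset.smul_sum, ← Finset.smul_sum, ← smul_add,
            Finset.sum_filter_add_sum_filter_not]
  · -- Case 2 : `v ⊳ v s_i`
    intro hrs hdom _
    have hlt : dv i < dv (i+1) := by
      by_contra hc
      have hgt : dv (i+1) < dv i := by omega
      have hlex : nodeLex (tnu (dv (i+1))) (tnu (dv i)) :=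
        (hord _ _ hdi1.1 hdi1.2 hdi.1 hdi.2).mp hgt
      rw [← hxv, ← hyv] at hlex
      by_cases hsame : (v (i+1)).1 = (v i).1 ∧ (v (i+1)).2.1 = (v i).2.1
      · have hcol : (v (i+1)).2.2 < (v i).2.2 := by
          simp only [nodeLex] at hlex
          omega
        have := hv.2 (i+1) i (by omega) (by omega) (by omega) (by omega)
          hsame.1 hsame.2 hcol
        omega
      · have hrb : (v (i+1)).1 < (v i).1
            ∨ ((v (i+1)).1 = (v i).1 ∧ (v (i+1)).2.1 < (v i).2.1) := by
          simp only [nodeLex] at hlex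
          omega
        obtain ⟨l, jj, hpl⟩ := psum_swap_lt v (by omega) hrb
        have := hdom i l jj (by omega) (by omega)
        omega
    have hstep := h.Tw_mul dv i hi1 hi2
      (by rw [permLength_mul_swap dv hi1 hi2 hlt]; omega)
    rw [mul_assoc, ← hstep]
  · -- Case 3 : `v s_i ⊳ v`
    intro hrs hdom _
    have hgt : dv (i+1) < dv i := by
      by_contra hc
      have hlt : dv i < dv (i+1) := by omega
      have hlex : nodeLex (tnu (dv i)) (tnu (dv (i+1))) :=
        (hord _ _ hdi.1 hdi.2 hdi1.1 hdi1.2).mp hlt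
      rw [← hxv, ← hyv] at hlex
      by_cases hsame : (v i).1 = (v (i+1)).1 ∧ (v i).2.1 = (v (i+1)).2.1
      · have hcol : (v i).2.2 < (v (i+1)).2.2 := by
          simp only [nodeLex] at hlex
          omega
        have h1 := actTab_swap_left v i
        have h2 := actTab_swap_right v i
        have := hrs.2 (i+1) i (by omega) (by omega) (by omega) (by omega)
          (by rw [h1, h2]; exact hsame.1) (by rw [h1, h2]; exact hsame.2)
          (by rw [h1, h2]; exact hcol)
        omega
      · have hrb : (v i).1 < (v (i+1)).1
            ∨ ((v i).1 = (v (i+1)).1 ∧ (v i).2.1 < (v (i+1)).2.1) := by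
          simp only [nodeLex] at hlex
          omega
        obtain ⟨l, jj, hpl⟩ := psum_swap_lt' v (by omega) hrb
        have := hdom i l jj (by omega) (by omega)
        omega
    set d' := dv * swapP i with hd'
    have hd'apply : d' i = dv (i+1) := by
      rw [hd', Equiv.Perm.mul_apply, swapP_apply_left]
    have hd'apply1 : d' (i+1) = dv i := by
      rw [hd', Equiv.Perm.mul_apply, swapP_apply_right]
    have hdd : d' * swapP i = dv := by
      rw [hd', mul_assoc, swapP_mul_self, mul_one]
    have hlen := permLength_mul_swap d' hi1 hi2
      (by rw [hd'apply, hd'apply1]; exact hgt)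
    rw [hdd] at hlen
    have hTw : h.Tw dv = h.Tw d' * h.T i := by
      have := h.Tw_mul d' i hi1 hi2 (by rw [hdd]; omega)
      rw [hdd] at this
      exact this
    rw [hTw, ← mul_assoc (h.xElt tnu) (h.Tw d') (h.T i),
      mul_assoc (h.xElt tnu * h.Tw d') (h.T i) (h.T i), mul_T_sq h hi1 hi2]

end SpechtInduction
end
end

section
/- Let μ be a multipartition of n and i ∈ I. Let A_1,...,A_z be the addable i-nodes of μ listed from top to bottom, and α_j = μ ∪ {A_j} the corresponding multipartitions of n+1. Then α_1 ⊳ α_2 ⊳ ... ⊳ α_z in the dominance order. -/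
open scoped Classical

noncomputable section

namespace SpechtInduction

private lemma aux_succ {f g : ℕ} (h : ∀ c, c < f ↔ (c < g ∨ c = g)) : f = g + 1 := by
  have h1 := (h g).mpr (Or.inr rfl)
  have h2 : f - 1 < g ∨ f - 1 = g := (h (f - 1)).mp (by omega)
  omega

private lemma aux_eq {f g : ℕ} (h : ∀ c, c < f ↔ c < g) : f = g := by
  rcases Nat.lt_trichotomy f g with h1 | h1 | h1
  · have := (h f).mpr h1; omega
  · exact h1
  · have := (h g).mp h1; omega

private lemma aux_rowLen {ℓ n m : ℕ} (mu : Multicomp ℓ n) (al : Multicomp ℓ m)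
    (Aa : Node) (hA : AddableNode mu.rowLen ℓ Aa)
    (hAl : ∀ x, al.mem x ↔ (mu.mem x ∨ x = Aa)) (l r : ℕ) :
    al.rowLen l r = mu.rowLen l r + (if l = Aa.1 ∧ r = Aa.2.1 then 1 else 0) := by
  obtain ⟨a, p, q⟩ := Aa
  have hq : q = mu.rowLen a p := hA.2.1
  have key : ∀ c, al.rowLen l r > c ↔ (mu.rowLen l r > c ∨ (l = a ∧ r = p ∧ c = q)) := by
    intro c
    have := hAl (l, r, c)
    simp only [Multicomp.mem, Prod.mk.injEq] at this
    constructor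
    · intro hc
      rcases this.mp hc with h | ⟨h1, h2, h3⟩
      · exact Or.inl h
      · exact Or.inr ⟨h1, h2, h3⟩
    · intro hc
      refine this.mpr ?_
      rcases hc with h | ⟨h1, h2, h3⟩
      · exact Or.inl h
      · exact Or.inr ⟨h1, h2, h3⟩
  by_cases hc : l = a ∧ r = p
  · obtain ⟨rfl, rfl⟩ := hc
    rw [if_pos (⟨rfl, rfl⟩ : l = (l, r, q).1 ∧ r = (l, r, q).2.1)]
    apply aux_succ
    intro c
    have := key c
    omega
  · rw [if_neg hc]
    simp only [add_zero]
    apply aux_eq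
    intro c
    have := key c
    constructor
    · intro hlt
      rcases this.mp hlt with h | ⟨h1, h2, _⟩
      · exact h
      · exact absurd ⟨h1, h2⟩ hc
    · intro hlt; exact this.mpr (Or.inl hlt)

private lemma aux_list_sum (L : List ℕ) : ∀ N, L.length ≤ N →
    L.sum = ∑ r ∈ Finset.range N, L.getD r 0 := by
  induction L with
  | nil => intro N _; simp
  | cons a L ih =>
    intro N hN
    have hN1 : 1 ≤ N := le_trans (by simp) hN
    obtain ⟨N', rfl⟩ : ∃ N', N = N' + 1 := ⟨N - 1, by omega⟩
    rw [Finset.sum_range_succ']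
    simp only [List.getD_cons_succ, List.getD_cons_zero, List.sum_cons]
    rw [← ih N' (by simpa using hN)]
    omega

private lemma aux_compSize_eq_sum {ℓ n : ℕ} (mu : Multicomp ℓ n) (l N : ℕ)
    (hN : (mu.parts.getD l []).length ≤ N) :
    mu.compSize l = ∑ r ∈ Finset.range N, mu.rowLen l r :=
  aux_list_sum _ N hN

private lemma aux_compSize {ℓ n m : ℕ} (mu : Multicomp ℓ n) (al : Multicomp ℓ m)
    (Aa : Node) (hA : AddableNode mu.rowLen ℓ Aa)
    (hAl : ∀ x, al.mem x ↔ (mu.mem x ∨ x = Aa)) (l : ℕ) :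
    al.compSize l = mu.compSize l + (if l = Aa.1 then 1 else 0) := by
  set N := max (mu.parts.getD l []).length
      (max (al.parts.getD l []).length (Aa.2.1 + 1)) with hNdef
  have h1 : mu.compSize l = ∑ r ∈ Finset.range N, mu.rowLen l r :=
    aux_compSize_eq_sum mu l N (by omega)
  have h2 : al.compSize l = ∑ r ∈ Finset.range N, al.rowLen l r :=
    aux_compSize_eq_sum al l N (by omega)
  have hrow := aux_rowLen mu al Aa hA hAl
  rw [h1, h2]
  have : ∑ r ∈ Finset.range N, al.rowLen l r =
      ∑ r ∈ Finset.range N, (mu.rowLen l r + (if l = Aa.1 ∧ r = Aa.2.1 then 1 else 0)) :=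
    Finset.sum_congr rfl fun r _ => hrow l r
  rw [this, Finset.sum_add_distrib]
  congr 1
  by_cases hl : l = Aa.1
  · simp only [hl, true_and]
    rw [Finset.sum_ite_eq' (Finset.range N) Aa.2.1 (fun _ => 1)]
    simp [Finset.mem_range]
    omega
  · simp [hl]

private lemma aux_psum {ℓ n m : ℕ} (mu : Multicomp ℓ n) (al : Multicomp ℓ m)
    (Aa : Node) (hA : AddableNode mu.rowLen ℓ Aa)
    (hAl : ∀ x, al.mem x ↔ (mu.mem x ∨ x = Aa)) (l i : ℕ) :
    al.psum l i = mu.psum l i +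
      (if Aa.1 < l ∨ (Aa.1 = l ∧ Aa.2.1 < i) then 1 else 0) := by
  unfold Multicomp.psum
  have hcs : ∑ k ∈ Finset.range l, al.compSize k =
      (∑ k ∈ Finset.range l, mu.compSize k) + (if Aa.1 < l then 1 else 0) := by
    have : ∑ k ∈ Finset.range l, al.compSize k =
        ∑ k ∈ Finset.range l, (mu.compSize k + (if k = Aa.1 then 1 else 0)) :=
      Finset.sum_congr rfl fun k _ => aux_compSize mu al Aa hA hAl k
    rw [this, Finset.sum_add_distrib]
    congr 1
    rw [Finset.sum_ite_eq' (Finset.range l) Aa.1 (fun _ => 1)]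
    simp [Finset.mem_range]
  have hrs : ∑ j ∈ Finset.range i, al.rowLen l j =
      (∑ j ∈ Finset.range i, mu.rowLen l j) +
        (if l = Aa.1 ∧ Aa.2.1 < i then 1 else 0) := by
    have : ∑ j ∈ Finset.range i, al.rowLen l j =
        ∑ j ∈ Finset.range i, (mu.rowLen l j + (if l = Aa.1 ∧ j = Aa.2.1 then 1 else 0)) :=
      Finset.sum_congr rfl fun j _ => aux_rowLen mu al Aa hA hAl l j
    rw [this, Finset.sum_add_distrib]
    congr 1
    by_cases hl : l = Aa.1
    · simp only [hl, true_and]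
      rw [Finset.sum_ite_eq' (Finset.range i) Aa.2.1 (fun _ => 1)]
      simp [Finset.mem_range]
    · simp [hl]
  rw [hcs, hrs]
  by_cases h1 : Aa.1 < l
  · have h2 : ¬ (l = Aa.1 ∧ Aa.2.1 < i) := by omega
    simp only [if_pos h1, if_neg h2, if_pos (Or.inl h1)]
    omega
  · by_cases h2 : Aa.1 = l ∧ Aa.2.1 < i
    · have h2' : l = Aa.1 ∧ Aa.2.1 < i := ⟨h2.1.symm, h2.2⟩
      simp only [if_neg h1, if_pos h2', if_pos (Or.inr h2)]
      omega
    · have h3 : ¬ (Aa.1 < l ∨ (Aa.1 = l ∧ Aa.2.1 < i)) := by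
        rintro (h | h)
        · exact h1 h
        · exact h2 ⟨h.1, h.2⟩
      have h2' : ¬ (l = Aa.1 ∧ Aa.2.1 < i) := by
        intro h; exact h2 ⟨h.1.symm, h.2⟩
      simp only [if_neg h1, if_neg h2', if_neg h3]
      omega

/-- If the addable `i`-nodes of a multipartition `μ` are listed from
top to bottom, then adding them gives multipartitions of `n+1` that strictly decrease in
the dominance order: if `B` is below `A` then `μ ∪ {A} ⊳ μ ∪ {B}`. -/
theorem statement14 {ℓ n : ℕ} (e : ℕ) (he : e ≠ 1) (κ : ℕ → ℤ) (i : ZMod e)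
    (mu : Multicomp ℓ n) (hmu : mu.IsMultipartition)
    (Aa Bb : Node)
    (hA : AddableNode mu.rowLen ℓ Aa ∧ resOf e κ Aa = i)
    (hB : AddableNode mu.rowLen ℓ Bb ∧ resOf e κ Bb = i)
    (hbelow : Below Bb Aa)
    (alA alB : Multicomp ℓ (n + 1))
    (halA : alA.IsMultipartition) (halB : alB.IsMultipartition)
    (hAl : ∀ x, alA.mem x ↔ (mu.mem x ∨ x = Aa))
    (hBl : ∀ x, alB.mem x ↔ (mu.mem x ∨ x = Bb)) :
    alA.Dominates alB ∧ ¬ alB.Dominates alA := by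
  have hAp := aux_psum mu alA Aa hA.1 hAl
  have hBp := aux_psum mu alB Bb hB.1 hBl
  obtain ⟨a, p, _⟩ := Aa
  obtain ⟨b, q, _⟩ := Bb
  have hlex : a < b ∨ (a = b ∧ p < q) := by
    rcases hbelow with h | ⟨h1, h2⟩
    · exact Or.inl h
    · exact Or.inr ⟨h1.symm, h2⟩
  constructor
  · intro l i
    rw [hAp l i, hBp l i]
    simp only
    by_cases hb : b < l ∨ (b = l ∧ q < i)
    · have ha : a < l ∨ (a = l ∧ p < i) := by
        rcases hb with h | ⟨h1, h2⟩ <;> rcases hlex with h' | ⟨h1', h2'⟩ <;> omega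
      rw [if_pos hb, if_pos ha]
    · rw [if_neg hb]
      split <;> omega
  · intro hdom
    have := hdom a (p + 1)
    rw [hAp a (p + 1), hBp a (p + 1)] at this
    simp only at this
    split_ifs at this with h1 h2
    · rcases h2 with h | ⟨h2a, h2b⟩ <;> rcases hlex with h' | ⟨h1', h2'⟩ <;> omega
    · omega
    all_goals exact absurd (Or.inr ⟨by trivial, by omega⟩) h1

end SpechtInduction
end
end
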